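/- Let G be a finite simple graph with no dominating vertex, and suppose that for every weakly dominating vertex z of degree 4, every neighbor of z has at most one neighbor outside N[z]. Let v be a weakly dominating vertex of degree 4 such that every u ∈ N(v) has exactly one neighbor outside N[v], the outside-neighbors of distinct vertices of N(v) are pairwise distinct, and every u ∈ N(v) has at least one neighbor in N(v). Then every u ∈ N(v) has exactly one neighbor in N(v); that is, the edges inside N(v) form a perfect matching on the four vertices of N(v). -/
import Mathlib


/-- In a graph `G`, vertex `v` dominates vertex `u` if they are adjacent and
`N(u) ⊆ N[v]`. -/
def GDominates {V : Type*} (G : SimpleGraph V) (v u : V) : Prop :=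
  G.Adj u v ∧ G.neighborSet u ⊆ insert v (G.neighborSet v)

/-- In a graph `G`, vertex `v` weakly dominates vertex `u` if they are adjacent
and there is `x ∈ N(u)` with `x ∉ N[v]` and `N(u) \ {x} ⊆ N[v]`. -/
def GWeaklyDominates {V : Type*} (G : SimpleGraph V) (v u : V) : Prop :=
  G.Adj u v ∧ ∃ x ∈ G.neighborSet u,
    x ∉ insert v (G.neighborSet v) ∧
    G.neighborSet u \ {x} ⊆ insert v (G.neighborSet v)

/-- If `G` has no dominating vertex, every neighbor of a degree-4 weakly
dominating vertex `z` has at most one neighbor outside `N[z]`, and `v` is a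
weakly dominating vertex of degree 4 such that every `u ∈ N(v)` has exactly one
neighbor outside `N[v]`, these outside-neighbors are pairwise distinct, and
every `u ∈ N(v)` has at least one neighbor in `N(v)`, then every `u ∈ N(v)`
has exactly one neighbor in `N(v)`. -/
theorem matching_inside_neighborhood {V : Type*} [Fintype V] (G : SimpleGraph V)
    (hnodom : ∀ a b : V, ¬ GDominates G a b)
    (hwd4 : ∀ z : V, (∃ u, GWeaklyDominates G z u) → (G.neighborSet z).ncard = 4 →
      ∀ w ∈ G.neighborSet z,
        (G.neighborSet w \ insert z (G.neighborSet z)).ncard ≤ 1)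
    (v : V)
    (hwd : ∃ u, GWeaklyDominates G v u)
    (hdv : (G.neighborSet v).ncard = 4)
    (hone : ∀ u ∈ G.neighborSet v,
      (G.neighborSet u \ insert v (G.neighborSet v)).ncard = 1)
    (hdistinct : ∀ u w : V, u ∈ G.neighborSet v → w ∈ G.neighborSet v → u ≠ w →
      (G.neighborSet u \ insert v (G.neighborSet v)) ∩
        (G.neighborSet w \ insert v (G.neighborSet v)) = ∅)
    (hin : ∀ u ∈ G.neighborSet v, (G.neighborSet u ∩ G.neighborSet v).Nonempty) :
    ∀ u ∈ G.neighborSet v, (G.neighborSet u ∩ G.neighborSet v).ncard = 1 := by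
  classical
  intro u hu
  set Nv := G.neighborSet v with hNvdef
  set S := G.neighborSet u ∩ Nv with hSdef
  have hvu : G.Adj v u := hu
  have huNu : ∀ w : V, w ∉ G.neighborSet w := fun w h => G.irrefl h
  have huS : u ∉ S := fun h => huNu u h.1
  have hvS : v ∉ S := fun h => huNu v h.2
  have hsub : S ⊆ Nv \ {u} := fun x hx => ⟨hx.2, fun hxe => huS (hxe ▸ hx)⟩
  have hcard3 : (Nv \ {u}).ncard = 3 := by
    rw [Set.ncard_diff (by simpa using hu) (Set.toFinite _), hdv]
    simp
  have hle : S.ncard ≤ 3 := hcard3 ▸ Set.ncard_le_ncard hsub (Set.toFinite _)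
  have hge : 1 ≤ S.ncard := (Set.ncard_pos (Set.toFinite _)).mpr (hin u hu)
  -- rule out ncard = 3
  have hne3 : S.ncard ≠ 3 := by
    intro h3
    have hSeq : S = Nv \ {u} :=
      Set.eq_of_subset_of_ncard_le hsub (by omega) (Set.toFinite _)
    apply hnodom u v
    refine ⟨hvu, fun w hw => ?_⟩
    by_cases hwu : w = u
    · rw [hwu]; exact Set.mem_insert _ _
    · have : w ∈ S := hSeq ▸ ⟨hw, hwu⟩
      exact Set.mem_insert_of_mem _ this.1
  have hne2 : S.ncard ≠ 2 := by
    intro h2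
    obtain ⟨b, c, hbc, hSeq⟩ := Set.ncard_eq_two.mp h2
    have hbS : b ∈ S := hSeq ▸ Set.mem_insert b {c}
    have hcS : c ∈ S := hSeq ▸ (by simp)
    have hub : u ≠ b := fun h => huS (h ▸ hbS)
    have huc : u ≠ c := fun h => huS (h ▸ hcS)
    have htri : ({u, b, c} : Set V) ⊆ Nv := by
      intro x hx
      rcases hx with h | h | h
      · exact h ▸ hu
      · exact h ▸ hbS.2
      · exact h ▸ hcS.2
    have htricard : ({u, b, c} : Set V).ncard = 3 := by
      rw [Set.ncard_insert_of_notMem (by simp [hub, huc]),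
        Set.ncard_insert_of_notMem (by simp [hbc])]
      simp
    have hdcard : (Nv \ ({u, b, c} : Set V)).ncard = 1 := by
      rw [Set.ncard_diff htri (Set.toFinite _), hdv, htricard]
    obtain ⟨d, hd⟩ := Set.ncard_eq_one.mp hdcard
    have hdNv : d ∈ Nv := (hd ▸ (Set.mem_singleton d) : d ∈ Nv \ _).1
    have hdnot : d ∉ ({u, b, c} : Set V) := (hd ▸ (Set.mem_singleton d) : d ∈ Nv \ _).2
    have hdu : d ≠ u := fun h => hdnot (by simp [h])
    have hdNu : d ∉ G.neighborSet u := by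
      intro h
      have : d ∈ S := ⟨h, hdNv⟩
      rw [hSeq] at this
      rcases this with h | h <;> exact hdnot (by simp [h])
    -- degree of u is 4
    have hNueq : G.neighborSet u =
        insert v S ∪ (G.neighborSet u \ insert v Nv) := by
      ext x
      simp only [Set.mem_union, Set.mem_insert_iff, Set.mem_diff, hSdef, Set.mem_inter_iff]
      constructor
      · intro hx
        by_cases hxv : x = v
        · exact Or.inl (Or.inl hxv)
        · by_cases hxNv : x ∈ Nv
          · exact Or.inl (Or.inr ⟨hx, hxNv⟩)
          · exact Or.inr ⟨hx, by simp [hxv, hxNv]⟩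
      · rintro ((rfl | hx) | hx)
        · exact G.adj_symm hvu
        · exact hx.1
        · exact hx.1
    have hvNu : v ∈ G.neighborSet u := G.adj_symm hvu
    have hdegu : (G.neighborSet u).ncard = 4 := by
      rw [hNueq, Set.ncard_union_eq ?_ (Set.toFinite _) (Set.toFinite _),
        Set.ncard_insert_of_notMem hvS (Set.toFinite _), h2, hone u hu]
      · -- disjointness
        rw [Set.disjoint_left]
        rintro x (rfl | hx) hx2
        · exact hx2.2 (Set.mem_insert _ _)
        · exact hx2.2 (Set.mem_insert_of_mem _ hx.2)
    -- membership characterization of Nv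
    have hNvmem : ∀ w ∈ Nv, w = u ∨ w = b ∨ w = c ∨ w = d := by
      intro w hw
      by_cases h : w ∈ ({u, b, c} : Set V)
      · rcases h with h | h | h
        exacts [Or.inl h, Or.inr (Or.inl h), Or.inr (Or.inr (Or.inl h))]
      · have : w ∈ ({d} : Set V) := hd ▸ ⟨hw, h⟩
        exact Or.inr (Or.inr (Or.inr this))
    -- u weakly dominates v
    have hwdu : GWeaklyDominates G u v := by
      refine ⟨hvu, d, hdNv, ?_, ?_⟩
      · rintro (h | h)
        · exact hdu h
        · exact hdNu h
      · rintro x ⟨hx, hxd⟩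
        rcases hNvmem x hx with rfl | rfl | rfl | rfl
        · exact Set.mem_insert _ _
        · exact Set.mem_insert_of_mem _ hbS.1
        · exact Set.mem_insert_of_mem _ hcS.1
        · exact absurd rfl hxd
    have key := hwd4 u ⟨v, hwdu⟩ hdegu
    -- d is not adjacent to b nor c
    have hdnadj : ∀ w, w ∈ S → d ∉ G.neighborSet w := by
      intro w hwS hdw
      have hwNv : w ∈ Nv := hwS.2
      have hwNu : w ∈ G.neighborSet u := hwS.1
      have huw : u ≠ w := fun h => huS (h ▸ hwS)
      obtain ⟨xw, hxw⟩ := Set.ncard_eq_one.mp (hone w hwNv)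
      have hxwmem : xw ∈ G.neighborSet w \ insert v Nv := hxw ▸ Set.mem_singleton xw
      have hxwNu : xw ∉ insert u (G.neighborSet u) := by
        rintro (rfl | h)
        · exact hxwmem.2 (Set.mem_insert_of_mem _ hu)
        · have hxwd : xw ∈ G.neighborSet u \ insert v Nv := ⟨h, hxwmem.2⟩
          have := hdistinct u w hu hwNv huw
          exact absurd (Set.mem_inter hxwd hxwmem) (by simp [this])
      have hdnot' : d ∉ insert u (G.neighborSet u) := by
        rintro (rfl | h)
        · exact hdu rfl
        · exact hdNu h
      have hxwd : xw ≠ d := fun h => hxwmem.2 (h ▸ Set.mem_insert_of_mem _ hdNv)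
      have hpair : ({xw, d} : Set V) ⊆ G.neighborSet w \ insert u (G.neighborSet u) := by
        rintro x (rfl | rfl)
        · exact ⟨hxwmem.1, hxwNu⟩
        · exact ⟨hdw, hdnot'⟩
      have h2' : (2 : ℕ) ≤ (G.neighborSet w \ insert u (G.neighborSet u)).ncard := by
        have := Set.ncard_le_ncard hpair (Set.toFinite _)
        rwa [Set.ncard_pair hxwd] at this
      have := key w hwNu
      omega
    -- d has an inside neighbor: contradiction
    obtain ⟨w, hw⟩ := hin d hdNv
    have hwd' : w ∈ G.neighborSet d := hw.1
    rcases hNvmem w hw.2 with h | h | h | h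
    · exact hdNu (G.adj_symm (h ▸ hwd'))
    · exact hdnadj b hbS (G.adj_symm (h ▸ hwd'))
    · exact hdnadj c hcS (G.adj_symm (h ▸ hwd'))
    · exact huNu d (h ▸ hwd')
  omega
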